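/- arXiv:1702.06902 — 3 statements merged into one kernel-verified Lean document; each statement's English description precedes it below -/
import Mathlib

section
/- If there exists a forward simulation relation R from transition graph G₁ to transition graph G₂ with respect to mode map lmap : L₁ → L₂, then G₁ ⪯_lmap G₂, i.e., for every trace σ of G₁, there is a trace σ' of G₂ such that lmap(σ) is a prefix of σ'. -/
/-- A transition graph over modes `L` with vertex set `V`: a directed graph with
mode-labeled vertices and real-interval-labeled edges. -/
structure TransitionGraph (L : Type) (V : Type) where
  E : V → V → Prop
  vlab : V → L
  elabel : V → V → Set ℝ

namespace TransitionGraph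

variable {L L₁ L₂ L₃ : Type} {V V₁ V₂ V₃ : Type}

/-- An initial vertex has no incoming edges. -/
def IsInit (G : TransitionGraph L V) (v : V) : Prop := ∀ u, ¬ G.E u v

/-- A terminal vertex has no outgoing edges. -/
def IsTerm (G : TransitionGraph L V) (v : V) : Prop := ∀ u, ¬ G.E v u

/-- The graph is a DAG. -/
def Acyclic (G : TransitionGraph L V) : Prop := ∀ v, ¬ Relation.TransGen G.E v v

/-- Every edge is labeled by a nonempty closed bounded interval of nonnegative reals. -/
def WellLabeled (G : TransitionGraph L V) : Prop :=
  ∀ v u, G.E v u → ∃ a b : ℝ, 0 ≤ a ∧ a ≤ b ∧ G.elabel v u = Set.Icc a b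

/-- `Chain G v l` : starting from vertex `v`, the list `l` of (time, vertex) pairs
follows edges of `G` with times in the corresponding edge labels. -/
inductive Chain (G : TransitionGraph L V) : V → List (ℝ × V) → Prop
  | nil (v : V) : Chain G v []
  | cons {v u : V} {t : ℝ} {rest : List (ℝ × V)} :
      G.E v u → t ∈ G.elabel v u → Chain G u rest → Chain G v ((t, u) :: rest)

/-- Last vertex of a chain starting at `v`. -/
def lastVtx (v : V) (l : List (ℝ × V)) : V := (l.map Prod.snd).getLastD v

/-- A (maximal) path: starts at an initial vertex, follows edges, ends at a terminal vertex. -/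
def IsPath (G : TransitionGraph L V) (v : V) (l : List (ℝ × V)) : Prop :=
  G.IsInit v ∧ G.Chain v l ∧ G.IsTerm (lastVtx v l)

/-- A trace: a first mode followed by a list of (switching time, mode) pairs. -/
abbrev TraceT (L : Type) := L × List (ℝ × L)

/-- The trace of a path. -/
def traceOf (G : TransitionGraph L V) (v : V) (l : List (ℝ × V)) : TraceT L :=
  (G.vlab v, l.map fun p => (p.1, G.vlab p.2))

/-- The set of traces of a transition graph. -/
def Traces (G : TransitionGraph L V) : Set (TraceT L) :=
  {σ | ∃ v l, G.IsPath v l ∧ σ = G.traceOf v l}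

/-- Relabeling a trace by a mode map. -/
def mapTrace (f : L₁ → L₂) (σ : TraceT L₁) : TraceT L₂ :=
  (f σ.1, σ.2.map fun p => (p.1, f p.2))

/-- `σ` is a prefix of `σ'` (same first mode, prefix of the switching sequence). -/
def TracePrefix (σ σ' : TraceT L) : Prop := σ.1 = σ'.1 ∧ σ.2 <+: σ'.2

/-- `G₁ ⪯_lmap G₂`: every trace of `G₁`, relabeled by `lmap`, is a prefix of a trace of `G₂`. -/
def Contained (lmap : L₁ → L₂) (G₁ : TransitionGraph L₁ V₁) (G₂ : TransitionGraph L₂ V₂) : Prop :=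
  ∀ σ ∈ G₁.Traces, ∃ σ' ∈ G₂.Traces, TracePrefix (mapTrace lmap σ) σ'

/-- Forward simulation relation from `G₁` to `G₂` with respect to mode map `lmap`. -/
def ForwardSim (lmap : L₁ → L₂) (G₁ : TransitionGraph L₁ V₁) (G₂ : TransitionGraph L₂ V₂)
    (R : V₁ → V₂ → Prop) : Prop :=
  (∀ v, G₁.IsInit v → ∃ u, G₂.IsInit u ∧ R v u) ∧
  (∀ v u, R v u → lmap (G₁.vlab v) = G₂.vlab u) ∧
  (∀ v v' u, G₁.E v v' → R v u →
    ∃ us : Finset V₂, (∀ u' ∈ us, G₂.E u u' ∧ R v' u') ∧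
      G₁.elabel v v' ⊆ ⋃ u' ∈ us, G₂.elabel u u')

/-- `v` is the unique initial vertex of `G`. -/
def UniqueInit (G : TransitionGraph L V) (v : V) : Prop :=
  G.IsInit v ∧ ∀ u, G.IsInit u → u = v

/-- `v` is the unique terminal vertex of `G`. -/
def UniqueTerm (G : TransitionGraph L V) (v : V) : Prop :=
  G.IsTerm v ∧ ∀ u, G.IsTerm u → u = v

/-- Sequential composition of `G₁` and `G₂`, gluing the terminal vertex `v1t` of `G₁`
to the initial vertex `v2i` of `G₂`. -/
def seqComp (G₁ : TransitionGraph L V₁) (G₂ : TransitionGraph L V₂)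
    (v1t : V₁) (v2i : V₂) : TransitionGraph L (V₁ ⊕ {u : V₂ // u ≠ v2i}) where
  E x y :=
    match x, y with
    | Sum.inl v, Sum.inl u => G₁.E v u
    | Sum.inl v, Sum.inr u => v = v1t ∧ G₂.E v2i u.1
    | Sum.inr _, Sum.inl _ => False
    | Sum.inr v, Sum.inr u => G₂.E v.1 u.1
  vlab x :=
    match x with
    | Sum.inl v => G₁.vlab v
    | Sum.inr u => G₂.vlab u.1
  elabel x y :=
    match x, y with
    | Sum.inl v, Sum.inl u => G₁.elabel v u
    | Sum.inl _, Sum.inr u => G₂.elabel v2i u.1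
    | Sum.inr _, Sum.inl _ => ∅
    | Sum.inr v, Sum.inr u => G₂.elabel v.1 u.1

/-- The side conditions under which the sequential composition `G₁ ⨟ G₂` is defined:
unique initial/terminal vertices and matching glue labels. -/
def ComposableAt (G₁ : TransitionGraph L V₁) (G₂ : TransitionGraph L V₂)
    (v1i v1t : V₁) (v2i v2t : V₂) : Prop :=
  G₁.UniqueInit v1i ∧ G₁.UniqueTerm v1t ∧ G₂.UniqueInit v2i ∧ G₂.UniqueTerm v2t ∧
    G₁.vlab v1t = G₂.vlab v2i

end TransitionGraph

open TransitionGraph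

lemma TG_lastVtx_nil {V : Type} (v : V) : lastVtx v ([] : List (ℝ × V)) = v := rfl

lemma TG_lastVtx_cons {V : Type} (v u : V) (t : ℝ) (rest : List (ℝ × V)) :
    lastVtx v ((t, u) :: rest) = lastVtx u rest := by
  show ((u :: rest.map Prod.snd).getLastD v) = _
  rw [List.getLastD_cons]
  rfl

lemma TG_lastVtx_append {V : Type} (v : V) (l₁ l₂ : List (ℝ × V)) :
    lastVtx v (l₁ ++ l₂) = lastVtx (lastVtx v l₁) l₂ := by
  induction l₁ generalizing v with
  | nil => rfl
  | cons p rest ih =>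
      obtain ⟨t, u⟩ := p
      simp only [List.cons_append, TG_lastVtx_cons, ih]

lemma TG_chain_append {L V : Type} {G : TransitionGraph L V} :
    ∀ {l₁ : List (ℝ × V)} {v : V} {l₂ : List (ℝ × V)},
    G.Chain v l₁ → G.Chain (lastVtx v l₁) l₂ → G.Chain v (l₁ ++ l₂) := by
  intro l₁
  induction l₁ with
  | nil => intro v l₂ _ h2; exact h2
  | cons p rest ih =>
      intro v l₂ h1 h2
      obtain ⟨t, u⟩ := p
      cases h1 with
      | cons hE ht hc =>
          rw [TG_lastVtx_cons] at h2
          exact Chain.cons hE ht (ih hc h2)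

/-- From any vertex in an acyclic, well-labeled finite graph, there is a chain ending
at a terminal vertex. -/
lemma TG_extend {L V : Type} [Fintype V] (G : TransitionGraph L V)
    (hA : G.Acyclic) (hW : G.WellLabeled) :
    ∀ u, ∃ l, G.Chain u l ∧ G.IsTerm (lastVtx u l) := by
  have hwf : WellFounded (fun a b => Relation.TransGen G.E b a) := by
    have : IsIrrefl V (fun a b => Relation.TransGen G.E b a) := ⟨fun a h => hA a h⟩
    have : IsTrans V (fun a b => Relation.TransGen G.E b a) :=
      ⟨fun a b c h1 h2 => Relation.TransGen.trans h2 h1⟩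
    exact Finite.wellFounded_of_trans_of_irrefl _
  intro u
  induction u using WellFounded.induction hwf with
  | _ u ih =>
    by_cases hterm : G.IsTerm u
    · exact ⟨[], Chain.nil u, hterm⟩
    · simp only [IsTerm, not_forall, not_not] at hterm
      obtain ⟨u', hE⟩ := hterm
      obtain ⟨a, b, _, hab, hIcc⟩ := hW u u' hE
      have ha : a ∈ G.elabel u u' := by rw [hIcc]; exact ⟨le_refl a, hab⟩
      obtain ⟨l, hc, ht⟩ := ih u' (Relation.TransGen.single hE)
      exact ⟨(a, u') :: l, Chain.cons hE ha hc, by rwa [TG_lastVtx_cons]⟩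

/-- Simulation of chains. -/
lemma TG_sim_chain {L₁ L₂ V₁ V₂ : Type} {G₁ : TransitionGraph L₁ V₁}
    {G₂ : TransitionGraph L₂ V₂} {lmap : L₁ → L₂} {R : V₁ → V₂ → Prop}
    (hR : ForwardSim lmap G₁ G₂ R) :
    ∀ {l : List (ℝ × V₁)} {v : V₁} {u : V₂}, G₁.Chain v l → R v u →
    ∃ l₂ : List (ℝ × V₂), G₂.Chain u l₂ ∧
      l.map (fun p => (p.1, lmap (G₁.vlab p.2))) = l₂.map (fun p => (p.1, G₂.vlab p.2)) ∧
      R (lastVtx v l) (lastVtx u l₂) := by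
  intro l
  induction l with
  | nil => intro v u _ hvu; exact ⟨[], Chain.nil u, rfl, hvu⟩
  | cons p rest ih =>
      intro v u hc hvu
      obtain ⟨t, v'⟩ := p
      cases hc with
      | cons hE ht hc' =>
          obtain ⟨us, hus, hsub⟩ := hR.2.2 v v' u hE hvu
          have := hsub ht
          simp only [Set.mem_iUnion] at this
          obtain ⟨u', hu'mem, htu'⟩ := this
          obtain ⟨hE₂, hRv'⟩ := hus u' hu'mem
          obtain ⟨l₂, hc₂, hmap, hlast⟩ := ih hc' hRv'
          refine ⟨(t, u') :: l₂, Chain.cons hE₂ htu' hc₂, ?_, ?_⟩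
          · simp only [List.map_cons, hmap, hR.2.1 v' u' hRv']
          · rwa [TG_lastVtx_cons, TG_lastVtx_cons]


/-- If there exists a forward simulation relation from `G₁` to `G₂` with respect to the
mode map `lmap`, then `G₁ ⪯_lmap G₂`: every trace of `G₁`, relabeled by `lmap`, is a
prefix of some trace of `G₂`. -/
theorem forwardSim_implies_contained {L₁ L₂ V₁ V₂ : Type} [Fintype V₁] [Fintype V₂]
    (G₁ : TransitionGraph L₁ V₁) (G₂ : TransitionGraph L₂ V₂)
    (hA₁ : G₁.Acyclic) (hA₂ : G₂.Acyclic) (hW₁ : G₁.WellLabeled) (hW₂ : G₂.WellLabeled)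
    (lmap : L₁ → L₂) (R : V₁ → V₂ → Prop) (hR : ForwardSim lmap G₁ G₂ R) :
    Contained lmap G₁ G₂ := by
  rintro σ ⟨v, l, ⟨hinit, hchain, hterm⟩, rfl⟩
  obtain ⟨u, huinit, hvu⟩ := hR.1 v hinit
  obtain ⟨l₂, hc₂, hmap, hlast⟩ := TG_sim_chain hR hchain hvu
  obtain ⟨ext, hcext, htermext⟩ := TG_extend G₂ hA₂ hW₂ (lastVtx u l₂)
  refine ⟨G₂.traceOf u (l₂ ++ ext), ⟨u, l₂ ++ ext,
    ⟨huinit, TG_chain_append hc₂ hcext, by rwa [TG_lastVtx_append]⟩, rfl⟩, ?_, ?_⟩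
  · exact hR.2.1 v u hvu
  · simp only [traceOf, mapTrace, List.map_append, List.map_map]
    refine ⟨(ext.map fun p => (p.1, G₂.vlab p.2)), ?_⟩
    rw [← hmap]
    simp [Function.comp]
end

section
/- Let G₁ and G₂ be transition graphs over the same mode set L, each with a unique initial and unique terminal vertex, such that the terminal vertex label of G₁ equals the initial vertex label of G₂. Then G₁ ⪯_id G₁ ⨟ G₂, where id is the identity map on L: every trace of G₁ is a prefix of some trace of the sequential composition G₁ ⨟ G₂. -/
namespace TransitionGraph

variable {L L₁ L₂ L₃ : Type} {V V₁ V₂ V₃ : Type}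

lemma lastVtx_cons (v u : V) (t : ℝ) (l : List (ℝ × V)) :
    lastVtx v ((t, u) :: l) = lastVtx u l := by
  simp only [lastVtx, List.map_cons, List.getLastD_cons]

lemma lastVtx_append (v : V) (l₁ l₂ : List (ℝ × V)) :
    lastVtx v (l₁ ++ l₂) = lastVtx (lastVtx v l₁) l₂ := by
  induction l₁ generalizing v with
  | nil => simp [lastVtx]
  | cons p l ih => rw [List.cons_append, ← Prod.mk.eta (p := p), lastVtx_cons, lastVtx_cons, ih]

lemma lastVtx_map {V' : Type} (h : V → V') (v : V) (l : List (ℝ × V)) :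
    lastVtx (h v) (l.map fun p => (p.1, h p.2)) = h (lastVtx v l) := by
  induction l generalizing v with
  | nil => simp [lastVtx]
  | cons p l ih => rw [← Prod.mk.eta (p := p), List.map_cons, lastVtx_cons, lastVtx_cons, ih]

lemma chain_append {G : TransitionGraph L V} {v : V} {l₁ l₂ : List (ℝ × V)}
    (h₁ : G.Chain v l₁) (h₂ : G.Chain (lastVtx v l₁) l₂) : G.Chain v (l₁ ++ l₂) := by
  induction h₁ with
  | nil v => exact h₂
  | cons he ht hc ih => exact Chain.cons he ht (ih (by rwa [lastVtx_cons] at h₂))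

lemma chain_mem_in {G : TransitionGraph L V} {v : V} {l : List (ℝ × V)}
    (h : G.Chain v l) : ∀ p ∈ l, ∃ w, G.E w p.2 := by
  induction h with
  | nil v => intro p hp; simp at hp
  | cons he ht hc ih =>
    intro p hp
    rcases List.mem_cons.1 hp with h | h
    · subst h; exact ⟨_, he⟩
    · exact ih p h

/-- From any vertex of a finite acyclic well-labeled graph, there is a chain
to a terminal vertex. -/
lemma exists_chain_to_term [Finite V] (G : TransitionGraph L V)
    (hA : G.Acyclic) (hW : G.WellLabeled) (v : V) :
    ∃ l, G.Chain v l ∧ G.IsTerm (lastVtx v l) := by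
  have hwf : WellFounded (fun u w => G.E w u) := by
    haveI : IsTrans V (Function.swap (Relation.TransGen G.E)) :=
      ⟨fun a b c hab hbc => Relation.TransGen.trans hbc hab⟩
    haveI : IsIrrefl V (Function.swap (Relation.TransGen G.E)) := ⟨fun a => hA a⟩
    exact Subrelation.wf (fun h => Relation.TransGen.single h)
      (Finite.wellFounded_of_trans_of_irrefl (Function.swap (Relation.TransGen G.E)))
  induction v using hwf.induction with
  | _ v ih =>
    by_cases hterm : G.IsTerm v
    · exact ⟨[], Chain.nil v, hterm⟩
    · simp only [IsTerm, not_forall, not_not] at hterm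
      obtain ⟨u, hu⟩ := hterm
      obtain ⟨l, hc, ht⟩ := ih u hu
      obtain ⟨a, b, _, hab, hlab⟩ := hW v u hu
      refine ⟨(a, u) :: l, Chain.cons hu ?_ hc, by rwa [lastVtx_cons]⟩
      rw [hlab]; exact ⟨le_refl a, hab⟩


section Glue

variable [DecidableEq V₂] (G₁ : TransitionGraph L V₁) (G₂ : TransitionGraph L V₂)
  (v1t : V₁) (v2i : V₂)

/-- The gluing map from `V₂` into the vertex set of the sequential composition. -/
def glue (u : V₂) : V₁ ⊕ {u : V₂ // u ≠ v2i} :=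
  if h : u = v2i then Sum.inl v1t else Sum.inr ⟨u, h⟩

lemma glue_v2i : glue v1t v2i v2i = Sum.inl v1t := by simp [glue]

lemma glue_ne {u : V₂} (h : u ≠ v2i) : glue v1t v2i u = Sum.inr ⟨u, h⟩ := by simp [glue, h]

lemma lift_chain_left {v : V₁} {l : List (ℝ × V₁)} (h : G₁.Chain v l) :
    (G₁.seqComp G₂ v1t v2i).Chain (Sum.inl v) (l.map fun p => (p.1, Sum.inl p.2)) := by
  induction h with
  | nil v => exact Chain.nil _
  | cons he ht _ ih => exact Chain.cons (u := Sum.inl _) he ht ih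

lemma lift_chain_right (hI : G₂.IsInit v2i) {w : V₂} {l : List (ℝ × V₂)} (h : G₂.Chain w l) :
    (G₁.seqComp G₂ v1t v2i).Chain (glue v1t v2i w) (l.map fun p => (p.1, glue v1t v2i p.2)) := by
  induction h with
  | nil w => exact Chain.nil _
  | @cons w u t rest he ht _ ih =>
    have hu : u ≠ v2i := fun huv => hI w (huv ▸ he)
    rw [List.map_cons, glue_ne v1t v2i hu]
    by_cases hw : w = v2i
    · rw [hw] at he ht
      rw [hw, glue_v2i]
      refine Chain.cons (u := (Sum.inr ⟨u, hu⟩ : V₁ ⊕ {x : V₂ // x ≠ v2i})) ?_ ht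
        (glue_ne v1t v2i hu ▸ ih)
      exact ⟨rfl, he⟩
    · rw [glue_ne v1t v2i hw]
      refine Chain.cons (u := (Sum.inr ⟨u, hu⟩ : V₁ ⊕ {x : V₂ // x ≠ v2i})) ?_ ht
        (glue_ne v1t v2i hu ▸ ih)
      exact he

lemma glue_isTerm (hT₁ : G₁.IsTerm v1t) {w : V₂} (hw : G₂.IsTerm w) :
    (G₁.seqComp G₂ v1t v2i).IsTerm (glue v1t v2i w) := by
  by_cases hwi : w = v2i
  · rw [hwi] at hw
    rw [hwi, glue_v2i]
    intro x
    cases x with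
    | inl u => exact hT₁ u
    | inr u => exact fun h => hw u.1 h.2
  · rw [glue_ne v1t v2i hwi]
    intro x
    cases x with
    | inl u => exact not_false
    | inr u => exact hw u.1

end Glue

end TransitionGraph

open TransitionGraph in
/-- `G₁ ⪯_id G₁ ⨟ G₂`: every trace of `G₁` is a prefix of some trace of the
sequential composition `G₁ ⨟ G₂`. -/
theorem contained_seqComp_left {L V₁ V₂ : Type} [Fintype V₁] [Fintype V₂]
    (G₁ : TransitionGraph L V₁) (G₂ : TransitionGraph L V₂)
    (hA₁ : G₁.Acyclic) (hA₂ : G₂.Acyclic) (hW₁ : G₁.WellLabeled) (hW₂ : G₂.WellLabeled)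
    (v1i v1t : V₁) (v2i v2t : V₂) (hc : ComposableAt G₁ G₂ v1i v1t v2i v2t) :
    Contained (id : L → L) G₁ (G₁.seqComp G₂ v1t v2i) := by
  haveI : DecidableEq V₂ := Classical.decEq V₂
  obtain ⟨hUI₁, hUT₁, hUI₂, hUT₂, hglue⟩ := hc
  rintro σ ⟨v, l, ⟨hinit, hchain, hterm⟩, rfl⟩
  have hlast : lastVtx v l = v1t := hUT₁.2 _ hterm
  obtain ⟨l₂, hc₂, ht₂⟩ := exists_chain_to_term G₂ hA₂ hW₂ v2i
  refine ⟨(G₁.seqComp G₂ v1t v2i).traceOf (Sum.inl v)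
      ((l.map fun p => (p.1, Sum.inl p.2)) ++ (l₂.map fun p => (p.1, glue v1t v2i p.2))),
      ⟨Sum.inl v, _, ⟨?_, ?_, ?_⟩, rfl⟩, ?_, ?_⟩
  · -- initial
    intro x
    cases x with
    | inl u => exact hinit u
    | inr u => exact not_false
  · -- chain
    refine chain_append (lift_chain_left G₁ G₂ v1t v2i hchain) ?_
    rw [lastVtx_map Sum.inl v l, hlast, ← glue_v2i v1t v2i]
    exact lift_chain_right G₁ G₂ v1t v2i hUI₂.1 hc₂
  · -- terminal
    rw [lastVtx_append, lastVtx_map Sum.inl v l, hlast, ← glue_v2i v1t v2i,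
      lastVtx_map (glue v1t v2i) v2i l₂]
    exact glue_isTerm G₁ G₂ v1t v2i hUT₁.1 ht₂
  · -- same first mode
    rfl
  · -- prefix of switching sequence
    show (l.map fun p => (p.1, G₁.vlab p.2)).map (fun p => (p.1, id p.2)) <+: _
    simp only [traceOf, List.map_append, List.map_map]
    exact ⟨_, rfl⟩
end

section
/- The largest forward simulation between two transition graphs is the greatest fixpoint of a monotone functional on relations over vertex pairs, and since G₁ is a directed acyclic graph, the iterative refinement starting from V₁ × V₂ (repeatedly removing pairs (v,u) such that v is not one-step simulated by u) reaches this fixpoint within |V₁| iterations. -/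
namespace TransitionGraph

/-- The one-step simulation functional: `(v, u)` survives relative to `R` iff the labels
match under `lmap` and every outgoing edge of `v` is covered by a finite family of
outgoing edges of `u` leading to `R`-related successors. -/
def simStep {L₁ L₂ V₁ V₂ : Type} (lmap : L₁ → L₂)
    (G₁ : TransitionGraph L₁ V₁) (G₂ : TransitionGraph L₂ V₂)
    (R : V₁ → V₂ → Prop) : V₁ → V₂ → Prop := fun v u =>
  lmap (G₁.vlab v) = G₂.vlab u ∧
    ∀ v', G₁.E v v' →
      ∃ us : Finset V₂, (∀ u' ∈ us, G₂.E u u' ∧ R v' u') ∧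
        G₁.elabel v v' ⊆ ⋃ u' ∈ us, G₂.elabel u u'

end TransitionGraph

namespace SimStepAux

open TransitionGraph

variable {L₁ L₂ V₁ V₂ : Type} [Fintype V₁] [Fintype V₂]
  (G₁ : TransitionGraph L₁ V₁) (G₂ : TransitionGraph L₂ V₂) (lmap : L₁ → L₂)

lemma simStep_mono : Monotone (simStep lmap G₁ G₂) := by
  intro R S hRS v u ⟨hl, he⟩
  refine ⟨hl, fun v' hv' => ?_⟩
  obtain ⟨us, h1, h2⟩ := he v' hv'
  exact ⟨us, fun u' hu' => ⟨(h1 u' hu').1, hRS _ _ (h1 u' hu').2⟩, h2⟩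

/-- Number of vertices strictly reachable from `v`. -/
noncomputable def dep (v : V₁) : ℕ := {w | Relation.TransGen G₁.E v w}.ncard

lemma dep_lt_of_edge (hA : G₁.Acyclic) {v v' : V₁} (h : G₁.E v v') :
    dep G₁ v' < dep G₁ v := by
  apply Set.ncard_lt_ncard
  · constructor
    · intro w hw
      exact Relation.TransGen.head h hw
    · intro hsub
      exact hA v' (hsub (Relation.TransGen.single h))
  · exact Set.toFinite _

lemma dep_lt_card (hA : G₁.Acyclic) (v : V₁) : dep G₁ v < Fintype.card V₁ := by
  have : {w | Relation.TransGen G₁.E v w} ⊂ Set.univ := by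
    constructor
    · exact Set.subset_univ _
    · intro hsub
      exact hA v (hsub (Set.mem_univ v))
  calc dep G₁ v < (Set.univ : Set V₁).ncard := Set.ncard_lt_ncard this (Set.toFinite _)
    _ = Fintype.card V₁ := by simp [Set.ncard_univ]

lemma stab (hA : G₁.Acyclic) :
    ∀ k v u, dep G₁ v < k → ((simStep lmap G₁ G₂)^[k] ⊤) v u →
      ∀ m, ((simStep lmap G₁ G₂)^[m] ⊤) v u := by
  intro k
  induction k with
  | zero => intro v u hv; omega
  | succ k ih =>
    intro v u hv h m
    rw [Function.iterate_succ_apply'] at h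
    obtain ⟨hl, he⟩ := h
    match m with
    | 0 => trivial
    | m + 1 =>
      rw [Function.iterate_succ_apply']
      refine ⟨hl, fun v' hv' => ?_⟩
      obtain ⟨us, h1, h2⟩ := he v' hv'
      refine ⟨us, fun u' hu' => ⟨(h1 u' hu').1, ?_⟩, h2⟩
      have hd : dep G₁ v' < k := lt_of_lt_of_le (dep_lt_of_edge G₁ hA hv') (by omega)
      exact ih v' u' hd (h1 u' hu').2 m

lemma post_le (R : V₁ → V₂ → Prop) (hR : R ≤ simStep lmap G₁ G₂ R) :
    ∀ k, R ≤ (simStep lmap G₁ G₂)^[k] ⊤ := by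
  intro k
  induction k with
  | zero => exact le_top
  | succ k ih =>
    rw [Function.iterate_succ_apply']
    exact le_trans hR (simStep_mono G₁ G₂ lmap ih)

end SimStepAux

open TransitionGraph in
/-- The largest forward simulation between transition graphs is the greatest fixpoint of
the monotone functional `simStep`, and since `G₁` is a finite DAG, iterating `simStep`
starting from the full relation `V₁ × V₂` reaches this fixpoint within `|V₁|` iterations:
the iterate is a fixpoint, it dominates every post-fixpoint (hence is the greatest
fixpoint), and it dominates every forward simulation. -/
theorem simStep_gfp_in_card_iterations {L₁ L₂ V₁ V₂ : Type} [Fintype V₁] [Fintype V₂]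
    (G₁ : TransitionGraph L₁ V₁) (G₂ : TransitionGraph L₂ V₂)
    (hA₁ : G₁.Acyclic) (hA₂ : G₂.Acyclic) (hW₁ : G₁.WellLabeled) (hW₂ : G₂.WellLabeled)
    (lmap : L₁ → L₂) :
    Monotone (simStep lmap G₁ G₂) ∧
    simStep lmap G₁ G₂ ((simStep lmap G₁ G₂)^[Fintype.card V₁] ⊤) =
      (simStep lmap G₁ G₂)^[Fintype.card V₁] ⊤ ∧
    (∀ R : V₁ → V₂ → Prop, R ≤ simStep lmap G₁ G₂ R →
      R ≤ (simStep lmap G₁ G₂)^[Fintype.card V₁] ⊤) ∧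
    (∀ R : V₁ → V₂ → Prop, ForwardSim lmap G₁ G₂ R →
      R ≤ (simStep lmap G₁ G₂)^[Fintype.card V₁] ⊤) := by
  set F := simStep lmap G₁ G₂ with hF
  have hmono : Monotone F := SimStepAux.simStep_mono G₁ G₂ lmap
  refine ⟨hmono, ?_, ?_, ?_⟩
  · apply le_antisymm
    · have : F ((F)^[Fintype.card V₁] ⊤) = (F)^[Fintype.card V₁] (F ⊤) := by
        rw [← Function.iterate_succ_apply' F, Function.iterate_succ_apply]
      rw [this]
      exact hmono.iterate _ le_top
    · intro v u h
      have := SimStepAux.stab G₁ G₂ lmap hA₁ (Fintype.card V₁) v u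
        (SimStepAux.dep_lt_card G₁ hA₁ v) h (Fintype.card V₁ + 1)
      rwa [Function.iterate_succ_apply'] at this
  · intro R hR
    exact SimStepAux.post_le G₁ G₂ lmap R hR _
  · intro R hRsim
    obtain ⟨_, h2, h3⟩ := hRsim
    apply SimStepAux.post_le G₁ G₂ lmap R
    intro v u hr
    exact ⟨h2 v u hr, fun v' hv' => h3 v v' u hv' hr⟩
end
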